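/- Define the opposite degree lex order on monomials of K[x_1,...,x_n] by u >_oplex v iff deg u < deg v, or deg u = deg v and u >_lex v. Let [u_1, u_2] = {v : u_1 ≥_oplex v ≥_oplex u_2} be an interval, let a ≤ deg u_1 and b ≥ deg u_2, let L be the lower lex set of degree a (an interval of the form [x_1^a, w]) with #L = #[u_1,u_2], and let R be the upper rev-lex set of degree b (an interval of the form [w', x_n^b]) with #R = #[u_1,u_2]. Then for every k = 1,...,n: m_k(L) ≥ m_k([u_1,u_2]) ≥ m_k(R), where m_k(M) counts monomials in M supported on x_1,...,x_k. -/

import Mathlib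

/-- total degree of an exponent vector -/
def mdeg {n : ℕ} (m : Fin n →₀ ℕ) : ℕ := ∑ i, m i

/-- `LexLt u v` means `v >_lex u` for the lex order with `x_1 > x_2 > ⋯ > x_n`. -/
def LexLt {n : ℕ} (u v : Fin n →₀ ℕ) : Prop :=
  ∃ i : Fin n, (∀ j : Fin n, j < i → u j = v j) ∧ u i < v i

/-- `OplexLe u v` means `u ≤_oplex v`: either `u = v`, or `deg v < deg u`, or the degrees agree
and `v >_lex u`. -/
def OplexLe {n : ℕ} (u v : Fin n →₀ ℕ) : Prop :=
  u = v ∨ mdeg v < mdeg u ∨ (mdeg v = mdeg u ∧ LexLt u v)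

/-- `m_k(A)`: the number of monomials of `A` supported on `x_1,…,x_k`. -/
def mnum {n : ℕ} (A : Finset (Fin n →₀ ℕ)) (k : ℕ) : ℕ :=
  (A.filter (fun u => ∀ i : Fin n, u i ≠ 0 → i.val + 1 ≤ k)).card

open Finsupp

lemma lexLt_iff {n : ℕ} {u v : Fin n →₀ ℕ} : LexLt u v ↔ toLex u < toLex v := Iff.rfl

/-- `OpLt u v` : `u <_oplex v` strictly. -/
def OpLt {n : ℕ} (u v : Fin n →₀ ℕ) : Prop :=
  mdeg v < mdeg u ∨ (mdeg v = mdeg u ∧ LexLt u v)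

lemma oplexLe_iff {n : ℕ} {u v : Fin n →₀ ℕ} : OplexLe u v ↔ u = v ∨ OpLt u v := Iff.rfl

lemma opLt_irrefl {n : ℕ} (u : Fin n →₀ ℕ) : ¬ OpLt u u := by
  rintro (h | ⟨-, h⟩)
  · exact lt_irrefl _ h
  · exact lt_irrefl _ (lexLt_iff.mp h)

lemma opLt_trans {n : ℕ} {u v w : Fin n →₀ ℕ} (h1 : OpLt u v) (h2 : OpLt v w) : OpLt u w := by
  rcases h1 with h1 | ⟨e1, l1⟩ <;> rcases h2 with h2 | ⟨e2, l2⟩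
  · exact Or.inl (h2.trans h1)
  · exact Or.inl (lt_of_le_of_lt e2.le h1)
  · exact Or.inl (lt_of_lt_of_le h2 e1.le)
  · exact Or.inr ⟨e2.trans e1, lexLt_iff.mpr ((lexLt_iff.mp l1).trans (lexLt_iff.mp l2))⟩

lemma toLex_inj' {n : ℕ} {u v : Fin n →₀ ℕ} (h : toLex u = toLex v) : u = v := h

lemma opLt_trichotomy {n : ℕ} (u v : Fin n →₀ ℕ) : OpLt u v ∨ u = v ∨ OpLt v u := by
  rcases Nat.lt_trichotomy (mdeg v) (mdeg u) with h | h | h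
  · exact Or.inl (Or.inl h)
  · rcases lt_trichotomy (toLex u) (toLex v) with h' | h' | h'
    · exact Or.inl (Or.inr ⟨h, lexLt_iff.mpr h'⟩)
    · exact Or.inr (Or.inl (toLex_inj' h'))
    · exact Or.inr (Or.inr (Or.inr ⟨h.symm, lexLt_iff.mpr h'⟩))
  · exact Or.inr (Or.inr (Or.inl h))

lemma opLt_asymm {n : ℕ} {u v : Fin n →₀ ℕ} (h : OpLt u v) : ¬ OpLt v u := by
  intro h'
  exact opLt_irrefl u (opLt_trans h h')

lemma opLt_mdeg_le {n : ℕ} {u v : Fin n →₀ ℕ} (h : OpLt u v) : mdeg v ≤ mdeg u := by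
  rcases h with h | ⟨h, -⟩
  · exact h.le
  · exact h.le

lemma mdeg_eq_zero {n : ℕ} {u : Fin n →₀ ℕ} (h : mdeg u = 0) : u = 0 := by
  have := Finset.sum_eq_zero_iff.mp h
  ext i
  exact this i (Finset.mem_univ i)

lemma apply_le_mdeg {n : ℕ} (u : Fin n →₀ ℕ) (i : Fin n) : u i ≤ mdeg u :=
  Finset.single_le_sum (fun j _ => Nat.zero_le (u j)) (Finset.mem_univ i)

lemma mdeg_single {n : ℕ} (i : Fin n) (c : ℕ) : mdeg (Finsupp.single i c) = c := by
  unfold mdeg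
  rw [Finset.sum_eq_single i]
  · simp
  · intro j _ hj; simp [Finsupp.single_apply_eq_zero.mpr, Finsupp.single_eq_of_ne' (Ne.symm hj)]
  · intro h; exact absurd (Finset.mem_univ i) h

open Classical in
/-- all exponent vectors pointwise bounded by `D` -/
noncomputable def degBall (n D : ℕ) : Finset (Fin n →₀ ℕ) :=
  Finset.Iic (equivFunOnFinite.symm (fun _ => D))

lemma mem_degBall {n D : ℕ} {z : Fin n →₀ ℕ} (h : mdeg z ≤ D) : z ∈ degBall n D := by
  refine Finset.mem_Iic.mpr (Finsupp.le_def.mpr fun i => ?_)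
  exact le_trans (apply_le_mdeg z i) (by simpa using h)

open Classical in
/-- the set of monomials strictly above `u` in the oplex order -/
noncomputable def aboveFinset {n : ℕ} (u : Fin n →₀ ℕ) : Finset (Fin n →₀ ℕ) :=
  (degBall n (mdeg u)).filter (fun v => OpLt u v)

lemma mem_aboveFinset {n : ℕ} {u v : Fin n →₀ ℕ} : v ∈ aboveFinset u ↔ OpLt u v := by
  classical
  constructor
  · intro h; exact (Finset.mem_filter.mp h).2
  · intro h
    exact Finset.mem_filter.mpr ⟨mem_degBall (opLt_mdeg_le h), h⟩

/-- oplex rank : number of monomials strictly above -/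
noncomputable def rank {n : ℕ} (u : Fin n →₀ ℕ) : ℕ := (aboveFinset u).card

lemma rank_lt_rank {n : ℕ} {u v : Fin n →₀ ℕ} (h : OpLt u v) : rank v < rank u := by
  apply Finset.card_lt_card
  constructor
  · intro w hw
    exact mem_aboveFinset.mpr (opLt_trans h (mem_aboveFinset.mp hw))
  · intro hsub
    have := hsub (mem_aboveFinset.mpr h)
    exact opLt_irrefl v (mem_aboveFinset.mp this)

lemma opLt_iff_rank {n : ℕ} {u v : Fin n →₀ ℕ} : OpLt u v ↔ rank v < rank u := by
  constructor
  · exact rank_lt_rank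
  · intro h
    rcases opLt_trichotomy u v with h' | rfl | h'
    · exact h'
    · exact absurd h (lt_irrefl _)
    · exact absurd (rank_lt_rank h') (by omega)

lemma rank_inj {n : ℕ} {u v : Fin n →₀ ℕ} (h : rank u = rank v) : u = v := by
  rcases opLt_trichotomy u v with h' | h' | h'
  · exact absurd (rank_lt_rank h') (by omega)
  · exact h'
  · exact absurd (rank_lt_rank h') (by omega)

lemma oplexLe_iff_rank {n : ℕ} {u v : Fin n →₀ ℕ} : OplexLe u v ↔ rank v ≤ rank u := by
  rw [oplexLe_iff]
  constructor
  · rintro (rfl | h)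
    · exact le_rfl
    · exact (opLt_iff_rank.mp h).le
  · intro h
    rcases Nat.lt_or_ge (rank v) (rank u) with h' | h'
    · exact Or.inr (opLt_iff_rank.mpr h')
    · exact Or.inl (rank_inj (le_antisymm h' h))

lemma rank_zero {n : ℕ} : rank (0 : Fin n →₀ ℕ) = 0 := by
  rw [rank, Finset.card_eq_zero]
  ext v
  simp only [mem_aboveFinset, Finset.notMem_empty, iff_false]
  rintro (h | ⟨h, hl⟩)
  · simp [mdeg] at h
  · have : v = 0 := mdeg_eq_zero (by simpa [mdeg] using h)
    subst this
    exact lt_irrefl _ (lexLt_iff.mp hl)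

open Classical in
noncomputable def lowFinset (n d : ℕ) : Finset (Fin n →₀ ℕ) :=
  (degBall n d).filter (fun z => mdeg z < d)

lemma mem_lowFinset {n d : ℕ} {z : Fin n →₀ ℕ} : z ∈ lowFinset n d ↔ mdeg z < d := by
  classical
  constructor
  · intro h; exact (Finset.mem_filter.mp h).2
  · intro h; exact Finset.mem_filter.mpr ⟨mem_degBall h.le, h⟩

open Classical in
noncomputable def sliceFinset (n d : ℕ) : Finset (Fin n →₀ ℕ) :=
  (degBall n d).filter (fun z => mdeg z = d)

lemma mem_sliceFinset {n d : ℕ} {z : Fin n →₀ ℕ} : z ∈ sliceFinset n d ↔ mdeg z = d := by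
  classical
  constructor
  · intro h; exact (Finset.mem_filter.mp h).2
  · intro h; exact Finset.mem_filter.mpr ⟨mem_degBall h.le, h⟩

/-- number of monomials of degree `< d` -/
noncomputable def beta (n d : ℕ) : ℕ := (lowFinset n d).card

lemma beta_zero {n : ℕ} : beta n 0 = 0 := by
  rw [beta, Finset.card_eq_zero]
  ext z; simp [mem_lowFinset]

lemma beta_succ (n d : ℕ) : beta n (d + 1) = beta n d + (sliceFinset n d).card := by
  classical
  rw [beta, beta, ← Finset.card_union_of_disjoint]
  · congr 1
    ext z
    simp only [Finset.mem_union, mem_lowFinset, mem_sliceFinset]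
    omega
  · rw [Finset.disjoint_left]
    intro z hz hz'
    rw [mem_lowFinset] at hz; rw [mem_sliceFinset] at hz'
    omega

lemma sliceFinset_nonempty (n d : ℕ) : (sliceFinset (n+1) d).Nonempty :=
  ⟨Finsupp.single 0 d, mem_sliceFinset.mpr (mdeg_single _ _)⟩

lemma beta_lt_beta_succ (n d : ℕ) : beta (n+1) d < beta (n+1) (d+1) := by
  rw [beta_succ]
  have := Finset.card_pos.mpr (sliceFinset_nonempty n d)
  omega

lemma beta_mono {n : ℕ} {d e : ℕ} (h : d ≤ e) : beta (n+1) d ≤ beta (n+1) e := by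
  induction e with
  | zero => simp_all
  | succ e ih =>
    rcases Nat.lt_or_ge d (e+1) with h' | h'
    · exact le_trans (ih (by omega)) (beta_lt_beta_succ n e).le
    · have : d = e + 1 := by omega
      subst this; exact le_rfl

lemma le_beta (n d : ℕ) : d ≤ beta (n+1) d := by
  induction d with
  | zero => omega
  | succ d ih => have := beta_lt_beta_succ n d; omega

lemma beta_le_rank {n : ℕ} (z : Fin (n+1) →₀ ℕ) : beta (n+1) (mdeg z) ≤ rank z := by
  apply Finset.card_le_card
  intro w hw
  exact mem_aboveFinset.mpr (Or.inl (mem_lowFinset.mp hw))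

lemma rank_lt_beta {n : ℕ} (z : Fin (n+1) →₀ ℕ) : rank z < beta (n+1) (mdeg z + 1) := by
  classical
  have hsub : insert z (aboveFinset z) ⊆ lowFinset (n+1) (mdeg z + 1) := by
    intro w hw
    rcases Finset.mem_insert.mp hw with rfl | hw
    · exact mem_lowFinset.mpr (by omega)
    · exact mem_lowFinset.mpr (by have := opLt_mdeg_le (mem_aboveFinset.mp hw); omega)
  have hni : z ∉ aboveFinset z := fun h => opLt_irrefl z (mem_aboveFinset.mp h)
  have := Finset.card_le_card hsub
  rw [Finset.card_insert_of_notMem hni] at this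
  rw [rank]; rw [beta] at *
  omega

lemma mdeg_of_rank_range {n : ℕ} {z : Fin (n+1) →₀ ℕ} {d : ℕ}
    (h1 : beta (n+1) d ≤ rank z) (h2 : rank z < beta (n+1) (d+1)) : mdeg z = d := by
  by_contra h
  rcases Nat.lt_or_ge (mdeg z) d with h' | h'
  · have := rank_lt_beta z
    have : beta (n+1) (mdeg z + 1) ≤ beta (n+1) d := beta_mono (by omega)
    omega
  · have hge : d + 1 ≤ mdeg z := by omega
    have := beta_le_rank z
    have : beta (n+1) (d+1) ≤ beta (n+1) (mdeg z) := beta_mono hge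
    omega

lemma mdeg_le_rank {n : ℕ} (z : Fin (n+1) →₀ ℕ) : mdeg z ≤ rank z :=
  le_trans (le_beta _ _) (beta_le_rank z)

lemma rank_surjective {n : ℕ} : ∀ m : ℕ, ∃ u : Fin (n+1) →₀ ℕ, rank u = m := by
  intro m
  induction m with
  | zero => exact ⟨0, rank_zero⟩
  | succ m ih =>
    classical
    obtain ⟨u, hu⟩ := ih
    set F : Finset (Fin (n+1) →₀ ℕ) :=
      (degBall (n+1) (mdeg u + 1)).filter (fun w => OpLt w u ∧ mdeg w ≤ mdeg u + 1) with hF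
    have hmemF : ∀ w, w ∈ F ↔ (OpLt w u ∧ mdeg w ≤ mdeg u + 1) := by
      intro w
      constructor
      · intro h; exact (Finset.mem_filter.mp h).2
      · intro h; exact Finset.mem_filter.mpr ⟨mem_degBall h.2, h⟩
    have hne : F.Nonempty := by
      refine ⟨Finsupp.single 0 (mdeg u + 1), (hmemF _).mpr ⟨Or.inl ?_, ?_⟩⟩
      · rw [mdeg_single]; omega
      · rw [mdeg_single]
    obtain ⟨v, hvF, hvmin⟩ := Finset.exists_min_image F rank hne
    have hv := (hmemF v).mp hvF
    refine ⟨v, ?_⟩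
    have hset : aboveFinset v = insert u (aboveFinset u) := by
      ext w
      simp only [mem_aboveFinset, Finset.mem_insert]
      constructor
      · intro hw
        rcases opLt_trichotomy u w with h' | rfl | h'
        · exact Or.inr h'
        · exact Or.inl rfl
        · -- w strictly below u : contradiction with minimality
          exfalso
          have hwF : w ∈ F := by
            refine (hmemF w).mpr ⟨h', ?_⟩
            exact le_trans (opLt_mdeg_le hw) hv.2
          have := hvmin w hwF
          have := rank_lt_rank hw
          omega
      · rintro (rfl | hw)
        · exact hv.1
        · exact opLt_trans hv.1 hw
    have hni : u ∉ aboveFinset u := fun h => opLt_irrefl u (mem_aboveFinset.mp h)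
    rw [rank, hset, Finset.card_insert_of_notMem hni, ← rank, hu]

lemma sum_two_le_mdeg {n : ℕ} (z : Fin n →₀ ℕ) {i j : Fin n} (h : i ≠ j) :
    z i + z j ≤ mdeg z := by
  rw [mdeg, ← Finset.sum_pair h]
  exact Finset.sum_le_sum_of_subset (fun x _ => Finset.mem_univ x)

lemma rank_single_zero {n : ℕ} (d : ℕ) : rank (Finsupp.single (0 : Fin (n+1)) d) = beta (n+1) d := by
  classical
  have : aboveFinset (Finsupp.single (0 : Fin (n+1)) d) = lowFinset (n+1) d := by
    ext w
    simp only [mem_aboveFinset, mem_lowFinset]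
    constructor
    · rintro (h | ⟨h, hl⟩)
      · rwa [mdeg_single] at h
      · exfalso
        rw [mdeg_single] at h
        obtain ⟨i, hagree, hlt⟩ := hl
        rcases eq_or_ne i 0 with rfl | hi
        · rw [Finsupp.single_eq_same] at hlt
          have := apply_le_mdeg w 0
          omega
        · have h0 : w 0 = d := by
            have := hagree 0 (by
              rcases Fin.eq_zero_or_eq_succ i with rfl | ⟨j, rfl⟩
              · exact absurd rfl hi
              · exact Fin.succ_pos j)
            rw [Finsupp.single_eq_same] at this; omega
          have hzi : 0 < w i := by
            have := Finsupp.single_eq_of_ne' (Ne.symm hi) (a' := i) (b := d)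
            omega
          have := sum_two_le_mdeg w (show (0 : Fin (n+1)) ≠ i from Ne.symm hi)
          omega
    · intro h
      exact Or.inl (by rwa [mdeg_single])
  rw [rank, this, beta]

lemma eq_single_last {n b : ℕ} {w : Fin (n+1) →₀ ℕ} (hdeg : mdeg w = b)
    (hlow : ∀ j : Fin (n+1), j < Fin.last n → w j = 0) :
    w = Finsupp.single (Fin.last n) b := by
  have hval : w (Fin.last n) = b := by
    rw [← hdeg, mdeg, Finset.sum_eq_single (Fin.last n)]
    · intro j _ hj
      exact hlow j (lt_of_le_of_ne (Fin.le_last j) hj)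
    · intro h; exact absurd (Finset.mem_univ _) h
  ext j
  rcases eq_or_ne j (Fin.last n) with rfl | hj
  · rw [hval, Finsupp.single_eq_same]
  · rw [hlow j (lt_of_le_of_ne (Fin.le_last j) hj), Finsupp.single_eq_of_ne' (Ne.symm hj)]

lemma rank_single_last {n : ℕ} (b : ℕ) :
    rank (Finsupp.single (Fin.last n) b) + 1 = beta (n+1) (b + 1) := by
  classical
  have hdeg : mdeg (Finsupp.single (Fin.last n) b) = b := mdeg_single _ _
  have hset : insert (Finsupp.single (Fin.last n) b) (aboveFinset (Finsupp.single (Fin.last n) b))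
      = lowFinset (n+1) (b+1) := by
    ext w
    simp only [Finset.mem_insert, mem_aboveFinset, mem_lowFinset]
    constructor
    · rintro (rfl | hw)
      · rw [hdeg]; omega
      · have := opLt_mdeg_le hw; rw [hdeg] at this; omega
    · intro hw
      rcases Nat.lt_or_ge (mdeg w) b with h' | h'
      · exact Or.inr (Or.inl (by rwa [hdeg]))
      · have hwb : mdeg w = b := by omega
        rcases eq_or_ne w (Finsupp.single (Fin.last n) b) with rfl | hne
        · exact Or.inl rfl
        · refine Or.inr (Or.inr ⟨by rw [hdeg, hwb], ?_⟩)
          -- find the least index where w is nonzero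
          have hwne : w ≠ 0 := by
            intro h0
            apply hne
            subst h0
            have : b = 0 := by simpa [mdeg] using hwb.symm
            subst this
            simp
          have hsupp : w.support.Nonempty := Finsupp.support_nonempty_iff.mpr hwne
          set i0 := w.support.min' hsupp with hi0
          have hi0mem : i0 ∈ w.support := w.support.min'_mem hsupp
          have hi0ne : w i0 ≠ 0 := Finsupp.mem_support_iff.mp hi0mem
          have hlowzero : ∀ j : Fin (n+1), j < i0 → w j = 0 := by
            intro j hj
            by_contra hjne
            have : i0 ≤ j := w.support.min'_le j (Finsupp.mem_support_iff.mpr hjne)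
            exact absurd hj (not_lt.mpr this)
          have hi0last : i0 ≠ Fin.last n := by
            intro h
            apply hne
            exact eq_single_last hwb (by rw [← h]; exact hlowzero)
          refine ⟨i0, ?_, ?_⟩
          · intro j hj
            rw [Finsupp.single_eq_of_ne, hlowzero j hj]
            intro h
            exact hi0last (by
              have := lt_of_lt_of_le hj (Fin.le_last i0)
              rw [← h] at this
              exact absurd this (lt_irrefl _))
          · rw [Finsupp.single_eq_of_ne' (Ne.symm hi0last)]
            omega
  have hni : (Finsupp.single (Fin.last n) b) ∉ aboveFinset (Finsupp.single (Fin.last n) b) :=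
    fun h => opLt_irrefl _ (mem_aboveFinset.mp h)
  have := congrArg Finset.card hset
  rw [Finset.card_insert_of_notMem hni] at this
  rw [rank, beta, ← this]

/-- support in the first `k` variables -/
def Sk {n : ℕ} (k : ℕ) (z : Fin n →₀ ℕ) : Prop := ∀ i : Fin n, z i ≠ 0 → i.val + 1 ≤ k

open Classical in
noncomputable def window (n p t : ℕ) : Finset (Fin (n+1) →₀ ℕ) :=
  (degBall (n+1) (p+t)).filter (fun z => p ≤ rank z ∧ rank z < p + t)

lemma mem_window {n p t : ℕ} {z : Fin (n+1) →₀ ℕ} :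
    z ∈ window n p t ↔ p ≤ rank z ∧ rank z < p + t := by
  classical
  constructor
  · intro h; exact (Finset.mem_filter.mp h).2
  · intro h
    refine Finset.mem_filter.mpr ⟨mem_degBall ?_, h⟩
    have := mdeg_le_rank z
    omega

lemma window_card (n p t : ℕ) : (window n p t).card = t := by
  classical
  have h : (window n p t).card = (Finset.Ico p (p+t)).card := by
    apply Finset.card_bij (fun z _ => rank z)
    · intro z hz
      rw [Finset.mem_Ico]
      exact (mem_window.mp hz)
    · intro a ha b hb hab
      exact rank_inj hab
    · intro m hm
      obtain ⟨u, hu⟩ := rank_surjective (n := n) m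
      rw [Finset.mem_Ico] at hm
      refine ⟨u, mem_window.mpr (by rw [hu]; exact hm), hu⟩
  rw [h, Nat.card_Ico]
  omega

open Classical in
noncomputable def cnt (n k p t : ℕ) : ℕ := ((window n p t).filter (Sk k)).card

lemma cnt_eq_card {n k p t : ℕ} (S : Finset (Fin (n+1) →₀ ℕ))
    (hS : ∀ z, z ∈ S ↔ ((p ≤ rank z ∧ rank z < p + t) ∧ Sk k z)) : S.card = cnt n k p t := by
  classical
  rw [cnt]
  congr 1
  ext z
  rw [hS z, Finset.mem_filter, mem_window]

lemma cnt_zero (n k p : ℕ) : cnt n k p 0 = 0 := by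
  classical
  rw [cnt, Finset.card_eq_zero]
  ext z
  simp only [Finset.mem_filter, mem_window, Finset.notMem_empty, iff_false]
  rintro ⟨⟨h1, h2⟩, -⟩
  omega

lemma cnt_add (n k p s t : ℕ) : cnt n k p (s + t) = cnt n k p s + cnt n k (p + s) t := by
  classical
  rw [cnt, cnt, cnt, ← Finset.card_union_of_disjoint]
  · congr 1
    ext z
    simp only [Finset.mem_union, Finset.mem_filter, mem_window]
    constructor
    · rintro ⟨⟨h1, h2⟩, hs⟩
      rcases Nat.lt_or_ge (rank z) (p + s) with h' | h'
      · exact Or.inl ⟨⟨h1, h'⟩, hs⟩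
      · exact Or.inr ⟨⟨h', by omega⟩, hs⟩
    · rintro (⟨⟨h1, h2⟩, hs⟩ | ⟨⟨h1, h2⟩, hs⟩)
      · exact ⟨⟨h1, by omega⟩, hs⟩
      · exact ⟨⟨by omega, by omega⟩, hs⟩
  · rw [Finset.disjoint_left]
    rintro z hz hz'
    rw [Finset.mem_filter, mem_window] at hz hz'
    omega

lemma cnt_le (n k p t : ℕ) : cnt n k p t ≤ t := by
  classical
  calc cnt n k p t ≤ (window n p t).card := Finset.card_filter_le _ _
  _ = t := window_card n p t

lemma mdeg_tail_add {n : ℕ} (z : Fin (n+1) →₀ ℕ) : mdeg z = z 0 + mdeg (Finsupp.tail z) := by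
  rw [mdeg, mdeg, Fin.sum_univ_succ]
  simp [Finsupp.tail_apply]

lemma lexlt_tail_iff {n : ℕ} {z z' : Fin (n+1) →₀ ℕ} (hdeg : mdeg z' = mdeg z) :
    LexLt z z' ↔ OpLt (Finsupp.tail z) (Finsupp.tail z') := by
  have h1 := mdeg_tail_add z
  have h2 := mdeg_tail_add z'
  rcases Nat.lt_trichotomy (z 0) (z' 0) with h0 | h0 | h0
  · constructor
    · intro _
      exact Or.inl (by omega)
    · intro _
      exact ⟨0, fun j hj => absurd hj (Fin.not_lt_zero j), h0⟩
  · have hdt : mdeg (Finsupp.tail z') = mdeg (Finsupp.tail z) := by omega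
    have hiff : LexLt z z' ↔ LexLt (Finsupp.tail z) (Finsupp.tail z') := by
      constructor
      · rintro ⟨i, hag, hlt⟩
        have hi0 : i ≠ 0 := by
          rintro rfl
          omega
        obtain ⟨j, rfl⟩ := Fin.eq_succ_of_ne_zero hi0
        refine ⟨j, ?_, ?_⟩
        · intro j' hj'
          rw [Finsupp.tail_apply, Finsupp.tail_apply]
          exact hag j'.succ (by rwa [Fin.succ_lt_succ_iff])
        · rw [Finsupp.tail_apply, Finsupp.tail_apply]
          exact hlt
      · rintro ⟨j, hag, hlt⟩
        refine ⟨j.succ, ?_, ?_⟩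
        · intro j' hj'
          induction j' using Fin.cases with
          | zero => exact h0
          | succ l =>
            have : l < j := by rwa [Fin.succ_lt_succ_iff] at hj'
            have := hag l this
            rwa [Finsupp.tail_apply, Finsupp.tail_apply] at this
        · have := hlt
          rwa [Finsupp.tail_apply, Finsupp.tail_apply] at this
    rw [hiff]
    constructor
    · intro h
      exact Or.inr ⟨hdt, h⟩
    · rintro (h | ⟨-, h⟩)
      · omega
      · exact h
  · constructor
    · rintro ⟨i, hag, hlt⟩
      exfalso
      induction i using Fin.cases with
      | zero => omega
      | succ l =>
        have := hag 0 (Fin.succ_pos l)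
        omega
    · rintro (h | ⟨h, -⟩) <;> omega

lemma opLt_cons_iff {n : ℕ} {z z' : Fin (n+1) →₀ ℕ} (hdeg : mdeg z' = mdeg z) :
    OpLt z z' ↔ OpLt (Finsupp.tail z) (Finsupp.tail z') := by
  rw [← lexlt_tail_iff hdeg]
  constructor
  · rintro (h | ⟨-, h⟩)
    · omega
    · exact h
  · intro h
    exact Or.inr ⟨hdeg, h⟩

lemma mdeg_cons {n : ℕ} (y : ℕ) (s : Fin n →₀ ℕ) : mdeg (Finsupp.cons y s) = y + mdeg s := by
  rw [mdeg_tail_add (Finsupp.cons y s), Finsupp.cons_zero, Finsupp.tail_cons]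

lemma rank_tail {n : ℕ} (z : Fin (n+2) →₀ ℕ) :
    rank z = beta (n+2) (mdeg z) + rank (Finsupp.tail z) := by
  classical
  have hsplit : aboveFinset z =
      lowFinset (n+2) (mdeg z) ∪ ((aboveFinset z).filter (fun w => mdeg w = mdeg z)) := by
    ext w
    simp only [Finset.mem_union, Finset.mem_filter, mem_aboveFinset, mem_lowFinset]
    constructor
    · intro hw
      rcases hw with h | ⟨h, hl⟩
      · exact Or.inl h
      · exact Or.inr ⟨Or.inr ⟨h, hl⟩, h⟩
    · rintro (h | ⟨hw, -⟩)
      · exact Or.inl h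
      · exact hw
  have hdisj : Disjoint (lowFinset (n+2) (mdeg z))
      ((aboveFinset z).filter (fun w => mdeg w = mdeg z)) := by
    rw [Finset.disjoint_left]
    intro w hw hw'
    rw [mem_lowFinset] at hw
    have := (Finset.mem_filter.mp hw').2
    omega
  have hcard : ((aboveFinset z).filter (fun w => mdeg w = mdeg z)).card
      = rank (Finsupp.tail z) := by
    apply Finset.card_bij (fun w _ => Finsupp.tail w)
    · intro w hw
      rw [Finset.mem_filter, mem_aboveFinset] at hw
      obtain ⟨hop, hd⟩ := hw
      rcases hop with h | ⟨-, hl⟩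
      · omega
      · exact mem_aboveFinset.mpr ((lexlt_tail_iff hd).mp hl)
    · intro a ha b hb hab
      rw [Finset.mem_filter] at ha hb
      have h1 := mdeg_tail_add a
      have h2 := mdeg_tail_add b
      have h0 : a 0 = b 0 := by rw [hab] at h1; omega
      rw [← Finsupp.cons_tail a, ← Finsupp.cons_tail b, h0, hab]
    · intro v hv
      have hop := mem_aboveFinset.mp hv
      have hvle : mdeg v ≤ mdeg (Finsupp.tail z) := opLt_mdeg_le hop
      have hzt := mdeg_tail_add z
      refine ⟨Finsupp.cons (mdeg z - mdeg v) v, ?_, Finsupp.tail_cons _ _⟩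
      have hdw : mdeg (Finsupp.cons (mdeg z - mdeg v) v) = mdeg z := by
        rw [mdeg_cons]; omega
      rw [Finset.mem_filter, mem_aboveFinset]
      refine ⟨?_, hdw⟩
      refine Or.inr ⟨hdw, (lexlt_tail_iff hdw).mpr ?_⟩
      rwa [Finsupp.tail_cons]
  rw [rank, hsplit, Finset.card_union_of_disjoint hdisj, hcard, beta]

lemma slice_card_eq {n : ℕ} (d : ℕ) : (sliceFinset (n+2) d).card = beta (n+1) (d+1) := by
  classical
  rw [beta]
  apply Finset.card_bij (fun w _ => Finsupp.tail w)
  · intro w hw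
    rw [mem_sliceFinset] at hw
    have := mdeg_tail_add w
    exact mem_lowFinset.mpr (by omega)
  · intro a ha b hb hab
    rw [mem_sliceFinset] at ha hb
    have h1 := mdeg_tail_add a
    have h2 := mdeg_tail_add b
    have h0 : a 0 = b 0 := by rw [hab] at h1; omega
    rw [← Finsupp.cons_tail a, ← Finsupp.cons_tail b, h0, hab]
  · intro v hv
    rw [mem_lowFinset] at hv
    refine ⟨Finsupp.cons (d - mdeg v) v, ?_, Finsupp.tail_cons _ _⟩
    rw [mem_sliceFinset, mdeg_cons]
    omega

lemma beta_bridge {n : ℕ} (d : ℕ) :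
    beta (n+2) (d+1) = beta (n+2) d + beta (n+1) (d+1) := by
  rw [beta_succ, slice_card_eq]

lemma Sk_tail_iff {n k : ℕ} (z : Fin (n+1) →₀ ℕ) :
    Sk (k+1) z ↔ Sk k (Finsupp.tail z) := by
  constructor
  · intro h j hj
    rw [Finsupp.tail_apply] at hj
    have := h j.succ hj
    rw [Fin.val_succ] at this
    omega
  · intro h i hi
    induction i using Fin.cases with
    | zero => simp
    | succ l =>
      have := h l (by rwa [Finsupp.tail_apply])
      rw [Fin.val_succ]
      omega

lemma cnt_bridge {n k d s t : ℕ} (h : s + t ≤ beta (n+1) (d+1)) :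
    cnt (n+1) (k+1) (beta (n+2) d + s) t = cnt n k s t := by
  classical
  rw [cnt, cnt]
  apply Finset.card_bij (fun w _ => Finsupp.tail w)
  · intro w hw
    rw [Finset.mem_filter, mem_window] at hw
    obtain ⟨⟨hw1, hw2⟩, hw3⟩ := hw
    have hblock : mdeg w = d := by
      apply mdeg_of_rank_range (n := n+1)
      · calc beta (n+2) d ≤ beta (n+2) d + s := by omega
        _ ≤ rank w := hw1
      · calc rank w < beta (n+2) d + s + t := hw2
        _ ≤ beta (n+2) d + beta (n+1) (d+1) := by omega
        _ = beta (n+2) (d+1) := (beta_bridge d).symm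
    have hr := rank_tail w
    rw [hblock] at hr
    rw [Finset.mem_filter, mem_window]
    refine ⟨⟨by omega, by omega⟩, (Sk_tail_iff w).mp hw3⟩
  · intro a ha b hb hab
    rw [Finset.mem_filter, mem_window] at ha hb
    obtain ⟨⟨ha1, ha2⟩, -⟩ := ha
    obtain ⟨⟨hb1, hb2⟩, -⟩ := hb
    have hnorm : beta (n+1+1) d = beta (n+2) d := rfl
    have hda : mdeg a = d := by
      apply mdeg_of_rank_range (n := n+1)
      · omega
      · rw [show beta (n+1+1) (d+1) = beta (n+2) d + beta (n+1) (d+1) from beta_bridge d]; omega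
    have hdb : mdeg b = d := by
      apply mdeg_of_rank_range (n := n+1)
      · omega
      · rw [show beta (n+1+1) (d+1) = beta (n+2) d + beta (n+1) (d+1) from beta_bridge d]; omega
    have h1 := mdeg_tail_add a
    have h2 := mdeg_tail_add b
    have h0 : a 0 = b 0 := by rw [hab] at h1; omega
    rw [← Finsupp.cons_tail a, ← Finsupp.cons_tail b, h0, hab]
  · intro v hv
    rw [Finset.mem_filter, mem_window] at hv
    obtain ⟨⟨hv1, hv2⟩, hv3⟩ := hv
    have hvd : mdeg v ≤ d := by
      by_contra hcon
      have : beta (n+1) (d+1) ≤ beta (n+1) (mdeg v) := beta_mono (by omega)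
      have := beta_le_rank v
      omega
    refine ⟨Finsupp.cons (d - mdeg v) v, ?_, Finsupp.tail_cons _ _⟩
    have hdw : mdeg (Finsupp.cons (d - mdeg v) v) = d := by rw [mdeg_cons]; omega
    have hr := rank_tail (Finsupp.cons (d - mdeg v) v)
    rw [hdw, Finsupp.tail_cons] at hr
    rw [Finset.mem_filter, mem_window]
    refine ⟨⟨by omega, by omega⟩, ?_⟩
    rw [Sk_tail_iff, Finsupp.tail_cons]
    exact hv3

/-- windows anchored at a block start dominate later windows -/
def LstarP (n k : ℕ) : Prop :=
  ∀ a t p, beta (n+1) a ≤ p → cnt n k p t ≤ cnt n k (beta (n+1) a) t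

/-- windows anchored at a block end are dominated by earlier windows -/
def RstarP (n k : ℕ) : Prop :=
  ∀ b t q, q + t ≤ beta (n+1) (b+1) → cnt n k (beta (n+1) (b+1) - t) t ≤ cnt n k q t

lemma Sk_zero_iff {n : ℕ} (z : Fin n →₀ ℕ) : Sk 0 z ↔ z = 0 := by
  constructor
  · intro h
    ext i
    by_contra hi
    have := h i hi
    omega
  · rintro rfl i hi
    simp at hi

lemma cnt_zero_k (n p t : ℕ) : cnt n 0 p t = if p = 0 ∧ 1 ≤ t then 1 else 0 := by
  classical
  rw [cnt]
  split_ifs with h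
  · rw [Finset.card_eq_one]
    refine ⟨0, ?_⟩
    ext z
    simp only [Finset.mem_filter, mem_window, Finset.mem_singleton]
    constructor
    · rintro ⟨-, hz⟩
      exact (Sk_zero_iff z).mp hz
    · rintro rfl
      exact ⟨by rw [rank_zero]; omega, (Sk_zero_iff 0).mpr rfl⟩
  · rw [Finset.card_eq_zero]
    ext z
    simp only [Finset.mem_filter, mem_window, Finset.notMem_empty, iff_false]
    rintro ⟨⟨h1, h2⟩, hz⟩
    rw [(Sk_zero_iff z).mp hz, rank_zero] at *
    omega

lemma Lstar_k0 (n : ℕ) : LstarP n 0 := by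
  intro a t p hp
  rw [cnt_zero_k, cnt_zero_k]
  split_ifs with h1 h2 <;> omega

lemma Rstar_k0 (n : ℕ) : RstarP n 0 := by
  intro b t q hq
  rw [cnt_zero_k, cnt_zero_k]
  have hb := le_beta n (b+1)
  split_ifs with h1 h2 <;> try omega

lemma Sk_ones {k : ℕ} (z : Fin 1 →₀ ℕ) : Sk (k+1) z := by
  intro i _
  omega

lemma cnt_ones (k p t : ℕ) : cnt 0 (k+1) p t = t := by
  classical
  rw [cnt]
  rw [Finset.filter_true_of_mem (fun z _ => Sk_ones z)]
  exact window_card 0 p t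

lemma Lstar_n0 (k : ℕ) : LstarP 0 (k+1) := by
  intro a t p hp
  rw [cnt_ones, cnt_ones]

lemma Rstar_n0 (k : ℕ) : RstarP 0 (k+1) := by
  intro b t q hq
  rw [cnt_ones, cnt_ones]

lemma blockExists (n : ℕ) (p : ℕ) : ∃ e, beta (n+1) e ≤ p ∧ p < beta (n+1) (e+1) := by
  induction p with
  | zero =>
    refine ⟨0, ?_, ?_⟩
    · rw [beta_zero]
    · have := beta_lt_beta_succ n 0
      have h0 : beta (n+1) 0 = 0 := beta_zero
      omega
  | succ p ih =>
    obtain ⟨e, he1, he2⟩ := ih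
    rcases Nat.lt_or_ge (p+1) (beta (n+1) (e+1)) with h | h
    · exact ⟨e, by omega, h⟩
    · exact ⟨e+1, h, by have := beta_lt_beta_succ n (e+1); omega⟩

lemma finMono {n k : ℕ} (HR : RstarP n k) {d e mu : ℕ} (hde : d ≤ e)
    (hmu : mu ≤ beta (n+1) (d+1)) :
    cnt n k (beta (n+1) (e+1) - mu) mu ≤ cnt n k (beta (n+1) (d+1) - mu) mu := by
  induction e with
  | zero =>
    have : d = 0 := by omega
    subst this; exact le_rfl
  | succ e ihe =>
    rcases Nat.eq_or_lt_of_le hde with rfl | hlt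
    · exact le_rfl
    · have hde' : d ≤ e := by omega
      refine le_trans ?_ (ihe hde')
      have hb1 : beta (n+1) (d+1) ≤ beta (n+1) (e+1) := beta_mono (by omega)
      have hb2 : beta (n+1) (e+1) ≤ beta (n+1) (e+1+1) := beta_mono (by omega)
      exact HR (e+1) mu (beta (n+1) (e+1) - mu) (by omega)

lemma cnt_bridge0 {n k d t : ℕ} (h : t ≤ beta (n+1) (d+1)) :
    cnt (n+1) (k+1) (beta (n+2) d) t = cnt n k 0 t := by
  have h2 : cnt (n+1) (k+1) (beta (n+2) d + 0) t = cnt n k 0 t := cnt_bridge (by omega)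
  rwa [Nat.add_zero] at h2

lemma cnt_bridge' {n k d s t : ℕ} (hs : s + t ≤ beta (n+1) (d+1)) {p : ℕ}
    (hp : p = beta (n+2) d + s) : cnt (n+1) (k+1) p t = cnt n k s t := by
  rw [hp]; exact cnt_bridge hs

lemma stepW2 {n k : ℕ} (HL : LstarP n k) (HR : RstarP n k) :
    ∀ lam d p, lam ≤ beta (n+1) (d+1) → beta (n+2) d ≤ p →
      cnt (n+1) (k+1) p lam ≤ cnt n k 0 lam := by
  intro lam
  induction lam using Nat.strong_induction_on with
  | _ lam IH =>
    intro d p hlam hp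
    obtain ⟨e, he1', he2'⟩ := blockExists (n+1) p
    have he1 : beta (n+2) e ≤ p := he1'
    have he2 : p < beta (n+2) (e+1) := he2'
    clear he1' he2'
    have hde : d ≤ e := by
      by_contra hcon
      have h3 : beta (n+2) (e+1) ≤ beta (n+2) d := beta_mono (n := n+1) (by omega)
      omega
    have hBe : beta (n+2) (e+1) = beta (n+2) e + beta (n+1) (e+1) := beta_bridge e
    have hmono' : beta (n+1) (d+1) ≤ beta (n+1) (e+1) := beta_mono (by omega)
    rcases le_or_gt (p + lam) (beta (n+2) (e+1)) with hin | hout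
    · have hbr : cnt (n+1) (k+1) p lam = cnt n k (p - beta (n+2) e) lam :=
        cnt_bridge' (d := e) (by omega) (by omega)
      rw [hbr]
      have h0 : beta (n+1) 0 = 0 := beta_zero
      have h4 := HL 0 lam (p - beta (n+2) e) (by omega)
      rwa [h0] at h4
    · obtain ⟨mu, hmu⟩ : ∃ mu, mu = beta (n+2) (e+1) - p := ⟨_, rfl⟩
      have hmupos : 0 < mu := by omega
      have hmult : mu < lam := by omega
      have hCsplit := cnt_add (n+1) (k+1) p mu (lam - mu)
      rw [show mu + (lam - mu) = lam by omega] at hCsplit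
      have hbr1 : cnt (n+1) (k+1) p mu = cnt n k (beta (n+1) (e+1) - mu) mu :=
        cnt_bridge' (d := e) (by omega) (by omega)
      have hfin1 : cnt n k (beta (n+1) (e+1) - mu) mu ≤ cnt n k (beta (n+1) (d+1) - mu) mu :=
        finMono HR hde (by omega)
      have hfin2 : cnt n k (beta (n+1) (d+1) - mu) mu ≤ cnt n k (lam - mu) mu :=
        HR d mu (lam - mu) (by omega)
      have hrec : cnt (n+1) (k+1) (p + mu) (lam - mu) ≤ cnt n k 0 (lam - mu) := by
        have hble : beta (n+2) d ≤ beta (n+2) (e+1) := beta_mono (n := n+1) (by omega)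
        exact IH (lam - mu) (by omega) d (p + mu) (by omega) (by omega)
      have hC'split := cnt_add n k 0 (lam - mu) mu
      rw [show (lam - mu) + mu = lam by omega, Nat.zero_add] at hC'split
      omega

lemma stepW2'' {n k : ℕ} (HL : LstarP n k) (HR : RstarP n k) :
    ∀ lam d q, lam ≤ beta (n+1) (d+1) → q + lam ≤ beta (n+2) (d+1) →
      cnt n k (beta (n+1) (d+1) - lam) lam ≤ cnt (n+1) (k+1) q lam := by
  intro lam
  induction lam using Nat.strong_induction_on with
  | _ lam IH =>
    intro d q hlam hq
    rcases Nat.eq_zero_or_pos lam with rfl | hpos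
    · rw [cnt_zero, cnt_zero]
    obtain ⟨e, he1', he2'⟩ := blockExists (n+1) (q + lam - 1)
    have he1 : beta (n+2) e ≤ q + lam - 1 := he1'
    have he2 : q + lam - 1 < beta (n+2) (e+1) := he2'
    clear he1' he2'
    have hde : e ≤ d := by
      by_contra hcon
      have h3 : beta (n+2) (d+1) ≤ beta (n+2) e := beta_mono (n := n+1) (by omega)
      omega
    have hBe : beta (n+2) (e+1) = beta (n+2) e + beta (n+1) (e+1) := beta_bridge e
    rcases le_or_gt (beta (n+2) e) q with hin | hout
    · have hbr : cnt (n+1) (k+1) q lam = cnt n k (q - beta (n+2) e) lam :=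
        cnt_bridge' (d := e) (by omega) (by omega)
      rw [hbr]
      refine le_trans (finMono HR hde ?_) (HR e lam (q - beta (n+2) e) (by omega))
      omega
    · obtain ⟨nu, hnu⟩ : ∃ nu, nu = q + lam - beta (n+2) e := ⟨_, rfl⟩
      have hnupos : 0 < nu := by omega
      have hnult : nu < lam := by omega
      have hCsplit := cnt_add (n+1) (k+1) q (lam - nu) nu
      rw [show (lam - nu) + nu = lam by omega,
        show q + (lam - nu) = beta (n+2) e by omega] at hCsplit
      have hbr : cnt (n+1) (k+1) (beta (n+2) e) nu = cnt n k 0 nu := cnt_bridge0 (by omega)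
      have hrec : cnt n k (beta (n+1) (d+1) - (lam - nu)) (lam - nu)
          ≤ cnt (n+1) (k+1) q (lam - nu) := by
        have hble : beta (n+2) e ≤ beta (n+2) (d+1) := beta_mono (n := n+1) (by omega)
        exact IH (lam - nu) (by omega) d q (by omega) (by omega)
      have hC'split := cnt_add n k (beta (n+1) (d+1) - lam) nu (lam - nu)
      rw [show nu + (lam - nu) = lam by omega] at hC'split
      rw [show beta (n+1) (d+1) - lam + nu = beta (n+1) (d+1) - (lam - nu) by omega] at hC'split
      have hmid : cnt n k (beta (n+1) (d+1) - lam) nu ≤ cnt n k 0 nu := by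
        have h0 : beta (n+1) 0 = 0 := beta_zero
        have h4 := HL 0 nu (beta (n+1) (d+1) - lam) (by omega)
        rwa [h0] at h4
      omega

lemma stepSlide1 {n k : ℕ} (HL : LstarP n k) (HR : RstarP n k)
    {d p : ℕ} (t : ℕ) (h1 : beta (n+2) d ≤ p) (h2 : p < beta (n+2) (d+1)) :
    cnt (n+1) (k+1) p t ≤ cnt (n+1) (k+1) (beta (n+2) d) t := by
  have hBd : beta (n+2) (d+1) = beta (n+2) d + beta (n+1) (d+1) := beta_bridge d
  obtain ⟨de, hde⟩ : ∃ de, de = p - beta (n+2) d := ⟨_, rfl⟩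
  rcases le_or_gt t de with hcase | hcase
  · have hbr : cnt (n+1) (k+1) (beta (n+2) d) t = cnt n k 0 t := cnt_bridge0 (by omega)
    rw [hbr]
    exact stepW2 HL HR t d p (by omega) h1
  · have hL := cnt_add (n+1) (k+1) (beta (n+2) d) de (t - de)
    rw [show de + (t - de) = t by omega, show beta (n+2) d + de = p by omega] at hL
    have hRr := cnt_add (n+1) (k+1) p (t - de) de
    rw [show (t - de) + de = t by omega] at hRr
    have hbr : cnt (n+1) (k+1) (beta (n+2) d) de = cnt n k 0 de := cnt_bridge0 (by omega)
    have hW2 : cnt (n+1) (k+1) (p + (t - de)) de ≤ cnt n k 0 de :=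
      stepW2 HL HR de d (p + (t - de)) (by omega) (by omega)
    omega

lemma stepSlide2 {n k : ℕ} (HL : LstarP n k) (HR : RstarP n k) (d t : ℕ) :
    cnt (n+1) (k+1) (beta (n+2) (d+1)) t ≤ cnt (n+1) (k+1) (beta (n+2) d) t := by
  have hBd : beta (n+2) (d+1) = beta (n+2) d + beta (n+1) (d+1) := beta_bridge d
  obtain ⟨N, hN⟩ : ∃ N, N = beta (n+1) (d+1) := ⟨_, rfl⟩
  rcases le_or_gt t N with hcase | hcase
  · have hbr : cnt (n+1) (k+1) (beta (n+2) d) t = cnt n k 0 t := cnt_bridge0 (by omega)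
    rw [hbr]
    exact stepW2 HL HR t d (beta (n+2) (d+1)) (by omega) (by omega)
  · have hL := cnt_add (n+1) (k+1) (beta (n+2) d) N (t - N)
    rw [show N + (t - N) = t by omega,
      show beta (n+2) d + N = beta (n+2) (d+1) by omega] at hL
    have hRr := cnt_add (n+1) (k+1) (beta (n+2) (d+1)) (t - N) N
    rw [show (t - N) + N = t by omega] at hRr
    have hbr : cnt (n+1) (k+1) (beta (n+2) d) N = cnt n k 0 N := cnt_bridge0 (by omega)
    have hW2 : cnt (n+1) (k+1) (beta (n+2) (d+1) + (t - N)) N ≤ cnt n k 0 N :=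
      stepW2 HL HR N d (beta (n+2) (d+1) + (t - N)) (by omega) (by omega)
    omega

lemma stepLchain {n k : ℕ} (HL : LstarP n k) (HR : RstarP n k) (a t : ℕ) :
    ∀ e, a ≤ e → cnt (n+1) (k+1) (beta (n+2) e) t ≤ cnt (n+1) (k+1) (beta (n+2) a) t := by
  intro e
  induction e with
  | zero =>
    intro h
    have : a = 0 := by omega
    subst this; exact le_rfl
  | succ e ihe =>
    intro h
    rcases Nat.eq_or_lt_of_le h with rfl | hlt
    · exact le_rfl
    · exact le_trans (stepSlide2 HL HR e t) (ihe (by omega))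

lemma stepLstar {n k : ℕ} (HL : LstarP n k) (HR : RstarP n k) :
    ∀ a t p, beta (n+2) a ≤ p → cnt (n+1) (k+1) p t ≤ cnt (n+1) (k+1) (beta (n+2) a) t := by
  intro a t p hp
  obtain ⟨e, he1', he2'⟩ := blockExists (n+1) p
  have he1 : beta (n+2) e ≤ p := he1'
  have he2 : p < beta (n+2) (e+1) := he2'
  clear he1' he2'
  have hae : a ≤ e := by
    by_contra hcon
    have h3 : beta (n+2) (e+1) ≤ beta (n+2) a := beta_mono (n := n+1) (by omega)
    omega
  exact le_trans (stepSlide1 HL HR t he1 he2) (stepLchain HL HR a t e hae)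

lemma stepSlide1' {n k : ℕ} (HL : LstarP n k) (HR : RstarP n k)
    {d q t : ℕ} (h1 : beta (n+2) d < q + t) (h2 : q + t ≤ beta (n+2) (d+1)) :
    cnt (n+1) (k+1) (beta (n+2) (d+1) - t) t ≤ cnt (n+1) (k+1) q t := by
  have hBd : beta (n+2) (d+1) = beta (n+2) d + beta (n+1) (d+1) := beta_bridge d
  obtain ⟨de, hde⟩ : ∃ de, de = beta (n+2) (d+1) - (q + t) := ⟨_, rfl⟩
  rcases le_or_gt t de with hcase | hcase
  · have hbr : cnt (n+1) (k+1) (beta (n+2) (d+1) - t) t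
        = cnt n k (beta (n+1) (d+1) - t) t := cnt_bridge' (d := d) (by omega) (by omega)
    rw [hbr]
    exact stepW2'' HL HR t d q (by omega) h2
  · have hL := cnt_add (n+1) (k+1) q de (t - de)
    rw [show de + (t - de) = t by omega,
      show q + de = beta (n+2) (d+1) - t by omega] at hL
    have hRr := cnt_add (n+1) (k+1) (beta (n+2) (d+1) - t) (t - de) de
    rw [show (t - de) + de = t by omega,
      show beta (n+2) (d+1) - t + (t - de) = q + t by omega] at hRr
    have hbr : cnt (n+1) (k+1) (q + t) de = cnt n k (beta (n+1) (d+1) - de) de :=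
      cnt_bridge' (d := d) (by omega) (by omega)
    have hW : cnt n k (beta (n+1) (d+1) - de) de ≤ cnt (n+1) (k+1) q de :=
      stepW2'' HL HR de d q (by omega) (by omega)
    omega

lemma stepSlide2' {n k : ℕ} (HL : LstarP n k) (HR : RstarP n k)
    {e t : ℕ} (ht : t ≤ beta (n+2) (e+1)) :
    cnt (n+1) (k+1) (beta (n+2) (e+2) - t) t ≤ cnt (n+1) (k+1) (beta (n+2) (e+1) - t) t := by
  have hBe : beta (n+2) (e+2) = beta (n+2) (e+1) + beta (n+1) (e+2) := beta_bridge (e+1)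
  have hsp1 : beta (n+1) (e+1+1) = beta (n+1) (e+2) := rfl
  have hsp2 : beta (n+2) (e+1+1) = beta (n+2) (e+2) := rfl
  obtain ⟨N, hN⟩ : ∃ N, N = beta (n+1) (e+2) := ⟨_, rfl⟩
  rcases le_or_gt t N with hcase | hcase
  · have hbr : cnt (n+1) (k+1) (beta (n+2) (e+2) - t) t
        = cnt n k (beta (n+1) (e+2) - t) t := cnt_bridge' (n := n) (k := k) (d := e+1)
        (s := beta (n+1) (e+2) - t) (by omega) (by omega)
    rw [hbr]
    have hW : cnt n k (beta (n+1) (e+1+1) - t) t ≤ cnt (n+1) (k+1) (beta (n+2) (e+1) - t) t :=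
      stepW2'' HL HR t (e+1) (beta (n+2) (e+1) - t) (by omega) (by omega)
    have hsp : beta (n+1) (e+1+1) = beta (n+1) (e+2) := rfl
    rwa [hsp] at hW
  · have hL := cnt_add (n+1) (k+1) (beta (n+2) (e+1) - t) N (t - N)
    rw [show N + (t - N) = t by omega,
      show beta (n+2) (e+1) - t + N = beta (n+2) (e+2) - t by omega] at hL
    have hRr := cnt_add (n+1) (k+1) (beta (n+2) (e+2) - t) (t - N) N
    rw [show (t - N) + N = t by omega,
      show beta (n+2) (e+2) - t + (t - N) = beta (n+2) (e+1) by omega] at hRr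
    have hbr : cnt (n+1) (k+1) (beta (n+2) (e+1)) N = cnt n k 0 N :=
      cnt_bridge0 (n := n) (k := k) (d := e+1) (by omega)
    have hW : cnt n k (beta (n+1) (e+1+1) - N) N ≤ cnt (n+1) (k+1) (beta (n+2) (e+1) - t) N :=
      stepW2'' HL HR N (e+1) (beta (n+2) (e+1) - t) (by omega) (by omega)
    rw [show beta (n+1) (e+1+1) - N = 0 from by
      have : beta (n+1) (e+1+1) = beta (n+1) (e+2) := rfl
      omega] at hW
    omega

lemma stepRchain {n k : ℕ} (HL : LstarP n k) (HR : RstarP n k) (e t : ℕ)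
    (hte : t ≤ beta (n+2) (e+1)) :
    ∀ b, e ≤ b →
      cnt (n+1) (k+1) (beta (n+2) (b+1) - t) t ≤ cnt (n+1) (k+1) (beta (n+2) (e+1) - t) t := by
  intro b
  induction b with
  | zero =>
    intro h
    have : e = 0 := by omega
    subst this; exact le_rfl
  | succ b ihb =>
    intro h
    rcases Nat.eq_or_lt_of_le h with rfl | hlt
    · exact le_rfl
    · have hb : t ≤ beta (n+2) (b+1) := by
        have h3 : beta (n+2) (e+1) ≤ beta (n+2) (b+1) := beta_mono (n := n+1) (by omega)
        omega
      exact le_trans (stepSlide2' HL HR (e := b) hb) (ihb (by omega))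

lemma stepRstar {n k : ℕ} (HL : LstarP n k) (HR : RstarP n k) :
    ∀ b t q, q + t ≤ beta (n+2) (b+1) →
      cnt (n+1) (k+1) (beta (n+2) (b+1) - t) t ≤ cnt (n+1) (k+1) q t := by
  intro b t q hq
  rcases Nat.eq_zero_or_pos t with rfl | hpos
  · rw [cnt_zero, cnt_zero]
  obtain ⟨e, he1', he2'⟩ := blockExists (n+1) (q + t - 1)
  have he1 : beta (n+2) e ≤ q + t - 1 := he1'
  have he2 : q + t - 1 < beta (n+2) (e+1) := he2'
  clear he1' he2'
  have heb : e ≤ b := by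
    by_contra hcon
    have h3 : beta (n+2) (b+1) ≤ beta (n+2) e := beta_mono (n := n+1) (by omega)
    omega
  have hte : t ≤ beta (n+2) (e+1) := by omega
  exact le_trans (stepRchain HL HR e t hte b heb)
    (stepSlide1' HL HR (d := e) (by omega) (by omega))

lemma mainLR (k : ℕ) : ∀ n, LstarP n k ∧ RstarP n k := by
  induction k with
  | zero => exact fun n => ⟨Lstar_k0 n, Rstar_k0 n⟩
  | succ k ih =>
    intro n
    cases n with
    | zero => exact ⟨Lstar_n0 k, Rstar_n0 k⟩
    | succ m =>
      obtain ⟨HL, HR⟩ := ih m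
      exact ⟨stepLstar HL HR, stepRstar HL HR⟩


/-- Interval lemma: let `[u_1,u_2]` be an interval in the opposite degree lex order,
`a ≤ deg u_1`, `b ≥ deg u_2`, `L` the lower lex set of degree `a` and `R` the upper rev-lex
set of degree `b`, both of cardinality `#[u_1,u_2]`.  Then
`m_k(L) ≥ m_k([u_1,u_2]) ≥ m_k(R)` for every `k = 1,…,n`. -/
theorem stmt_11 {n : ℕ}
    (u1 u2 : Fin (n + 1) →₀ ℕ) (h12 : OplexLe u2 u1)
    (a b : ℕ) (ha : a ≤ mdeg u1) (hb : mdeg u2 ≤ b)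
    (A L R : Finset (Fin (n + 1) →₀ ℕ))
    (hA : ∀ v, v ∈ A ↔ (OplexLe v u1 ∧ OplexLe u2 v))
    (hL : ∃ w : Fin (n + 1) →₀ ℕ, ∀ v, v ∈ L ↔
      (OplexLe v (Finsupp.single (0 : Fin (n + 1)) a) ∧ OplexLe w v))
    (hLcard : L.card = A.card)
    (hR : ∃ w : Fin (n + 1) →₀ ℕ, ∀ v, v ∈ R ↔
      (OplexLe v w ∧ OplexLe (Finsupp.single (Fin.last n) b) v))
    (hRcard : R.card = A.card) :
    ∀ k : ℕ, 1 ≤ k → k ≤ n + 1 →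
      mnum L k ≥ mnum A k ∧ mnum A k ≥ mnum R k := by
  intro k hk1 hk2
  classical
  obtain ⟨w, hw⟩ := hL
  obtain ⟨w', hw'⟩ := hR
  have hu21 : rank u1 ≤ rank u2 := oplexLe_iff_rank.mp h12
  obtain ⟨t, ht⟩ : ∃ t, t = rank u2 + 1 - rank u1 := ⟨_, rfl⟩
  -- A as a window
  have hAw : A = window n (rank u1) t := by
    ext v
    rw [hA v, mem_window, oplexLe_iff_rank, oplexLe_iff_rank]
    omega
  have hAcard : A.card = t := by rw [hAw, window_card]
  have htpos : 1 ≤ t := by omega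
  have hmnumA : mnum A k = cnt n k (rank u1) t := by
    rw [mnum]
    apply cnt_eq_card
    intro z
    rw [Finset.mem_filter, hA z, oplexLe_iff_rank, oplexLe_iff_rank]
    constructor
    · rintro ⟨⟨h1, h2⟩, h3⟩
      exact ⟨⟨h1, by omega⟩, h3⟩
    · rintro ⟨⟨h1, h2⟩, h3⟩
      exact ⟨⟨h1, by omega⟩, h3⟩
  -- the anchor ranks
  have hrtop : rank (Finsupp.single (0 : Fin (n+1)) a) = beta (n+1) a := rank_single_zero a
  have hrbot : rank (Finsupp.single (Fin.last n) b) + 1 = beta (n+1) (b+1) := rank_single_last b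
  -- L as a window
  have hLne : L.Nonempty := by
    rw [← Finset.card_pos, hLcard, hAcard]; omega
  have hwle : beta (n+1) a ≤ rank w := by
    obtain ⟨v, hv⟩ := hLne
    rw [hw v] at hv
    have h1 := oplexLe_iff_rank.mp hv.1
    have h2 := oplexLe_iff_rank.mp hv.2
    omega
  have hLw : L = window n (beta (n+1) a) (rank w + 1 - beta (n+1) a) := by
    ext v
    rw [hw v, mem_window, oplexLe_iff_rank, oplexLe_iff_rank, hrtop]
    omega
  have hLcard' : rank w + 1 - beta (n+1) a = t := by
    have := hLcard
    rw [hLw, window_card, hAcard] at this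
    exact this
  rw [hLcard'] at hLw
  have hmnumL : mnum L k = cnt n k (beta (n+1) a) t := by
    rw [mnum]
    apply cnt_eq_card
    intro z
    rw [Finset.mem_filter, hw z, oplexLe_iff_rank, oplexLe_iff_rank, hrtop]
    constructor
    · rintro ⟨⟨h1, h2⟩, h3⟩
      exact ⟨⟨h1, by omega⟩, h3⟩
    · rintro ⟨⟨h1, h2⟩, h3⟩
      exact ⟨⟨h1, by omega⟩, h3⟩
  -- R as a window
  have hRne : R.Nonempty := by
    rw [← Finset.card_pos, hRcard, hAcard]; omega
  have hw'ge : rank w' ≤ rank (Finsupp.single (Fin.last n) b) := by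
    obtain ⟨v, hv⟩ := hRne
    rw [hw' v] at hv
    have h1 := oplexLe_iff_rank.mp hv.1
    have h2 := oplexLe_iff_rank.mp hv.2
    omega
  have hRw : R = window n (rank w') (rank (Finsupp.single (Fin.last n) b) + 1 - rank w') := by
    ext v
    rw [hw' v, mem_window, oplexLe_iff_rank, oplexLe_iff_rank]
    omega
  have hRcard' : rank (Finsupp.single (Fin.last n) b) + 1 - rank w' = t := by
    have := hRcard
    rw [hRw, window_card, hAcard] at this
    exact this
  have hw'eq : rank w' = beta (n+1) (b+1) - t := by omega
  have hmnumR : mnum R k = cnt n k (beta (n+1) (b+1) - t) t := by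
    rw [mnum]
    apply cnt_eq_card
    intro z
    rw [Finset.mem_filter, hw' z, oplexLe_iff_rank, oplexLe_iff_rank]
    constructor
    · rintro ⟨⟨h1, h2⟩, h3⟩
      refine ⟨⟨by omega, by omega⟩, h3⟩
    · rintro ⟨⟨h1, h2⟩, h3⟩
      refine ⟨⟨by omega, by omega⟩, h3⟩
  obtain ⟨HL, HR⟩ := mainLR k n
  constructor
  · -- m_k(L) ≥ m_k(A)
    rw [ge_iff_le, hmnumA, hmnumL]
    have hp : beta (n+1) a ≤ rank u1 := by
      have h1 : beta (n+1) (mdeg u1) ≤ rank u1 := beta_le_rank u1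
      have h2 : beta (n+1) a ≤ beta (n+1) (mdeg u1) := beta_mono ha
      omega
    exact HL a t (rank u1) hp
  · -- m_k(A) ≥ m_k(R)
    rw [ge_iff_le, hmnumA, hmnumR]
    have hq : rank u1 + t ≤ beta (n+1) (b+1) := by
      have h1 : rank u2 < beta (n+1) (mdeg u2 + 1) := rank_lt_beta u2
      have h2 : beta (n+1) (mdeg u2 + 1) ≤ beta (n+1) (b+1) := beta_mono (by omega)
      omega
    exact HR b t (rank u1) hq
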